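/- Let y¹,…,yᵐ be vectors in a real Hilbert space and α_i ∈ (0,2). Then Σ_{i=1}^m ⟨(1/α_i)yⁱ + Σ_{j=i+1}^m yʲ, yⁱ⟩ = Σ_{i=1}^m (1/α_i − 1/2)‖yⁱ‖² + (1/2)‖Σ_{i=1}^m yⁱ‖², and consequently Σ_{i=1}^m ⟨(1/α_i)yⁱ + Σ_{j=i+1}^m yʲ, yⁱ⟩ ≥ (1/ᾱ − 1/2)Σ_{i=1}^m ‖yⁱ‖² ≥ (1/m)(1/ᾱ − 1/2)‖Σ_{i=1}^m yⁱ‖², where ᾱ = max_i α_i. -/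

import Mathlib

open RealInnerProductSpace

theorem sum_identity_and_bounds (H : Type*) [NormedAddCommGroup H] [InnerProductSpace ℝ H]
    (m : ℕ) (hm : 0 < m) (y : Fin m → H) (α : Fin m → ℝ)
    (hα : ∀ i, α i ∈ Set.Ioo (0 : ℝ) 2)
    (ᾱ : ℝ) (hᾱ : ᾱ = Finset.univ.sup' (Finset.univ_nonempty_iff.mpr ⟨⟨0, hm⟩⟩) α) :
    (∑ i, ⟪(1 / α i) • y i + ∑ j ∈ Finset.Ioi i, y j, y i⟫ =
        ∑ i, (1 / α i - 1 / 2) * ‖y i‖ ^ 2 + (1 / 2) * ‖∑ i, y i‖ ^ 2) ∧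
      (∑ i, ⟪(1 / α i) • y i + ∑ j ∈ Finset.Ioi i, y j, y i⟫ ≥
        (1 / ᾱ - 1 / 2) * ∑ i, ‖y i‖ ^ 2) ∧
      ((1 / ᾱ - 1 / 2) * ∑ i, ‖y i‖ ^ 2 ≥
        (1 / (m : ℝ)) * (1 / ᾱ - 1 / 2) * ‖∑ i, y i‖ ^ 2) := by
  have hαpos : ∀ i, 0 < α i := fun i => (hα i).1
  have hne : (Finset.univ : Finset (Fin m)).Nonempty := Finset.univ_nonempty_iff.mpr ⟨⟨0, hm⟩⟩
  have hᾱpos : 0 < ᾱ := by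
    obtain ⟨i, _, hi⟩ := Finset.exists_mem_eq_sup' hne α
    rw [hᾱ, hi]; exact hαpos i
  have hᾱle : ∀ i, α i ≤ ᾱ := fun i => hᾱ ▸ Finset.le_sup' α (Finset.mem_univ i)
  have hᾱlt2 : ᾱ < 2 := by
    rw [hᾱ, Finset.sup'_lt_iff]
    exact fun i _ => (hα i).2
  set S := ∑ i, ∑ j ∈ Finset.Ioi i, (⟪y j, y i⟫ : ℝ) with hS
  set A := ∑ i, (1 / α i) * ‖y i‖ ^ 2 with hA
  set B := ∑ i, ‖y i‖ ^ 2 with hB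
  set N := ‖∑ i, y i‖ ^ 2 with hN
  have htot : ∑ i, ∑ j, (⟪y j, y i⟫ : ℝ) = N := by
    rw [hN, ← real_inner_self_eq_norm_sq, sum_inner, Finset.sum_comm]
    exact Finset.sum_congr rfl fun i _ => by rw [inner_sum]
  have hoff : 2 * S = ∑ i, ∑ j ∈ ({i} : Finset (Fin m))ᶜ, (⟪y j, y i⟫ : ℝ) := by
    have h := Finset.sum_sum_Ioi_add_eq_sum_sum_off_diag (fun a b => (⟪y a, y b⟫ : ℝ))
    have h' : 2 * S = ∑ i, ∑ j ∈ Finset.Ioi i, ((⟪y j, y i⟫ : ℝ) + ⟪y i, y j⟫) := by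
      rw [hS, Finset.mul_sum]
      refine Finset.sum_congr rfl fun i _ => ?_
      rw [Finset.mul_sum]
      refine Finset.sum_congr rfl fun j _ => ?_
      rw [two_mul, real_inner_comm (y i) (y j)]
    rw [h', h]
  have hnorm : N = B + 2 * S := by
    have hcompl : ∀ i : Fin m,
        ∑ j ∈ ({i} : Finset (Fin m))ᶜ, (⟪y j, y i⟫ : ℝ) = (∑ j, (⟪y j, y i⟫ : ℝ)) - ‖y i‖ ^ 2 := by
      intro i
      have := Finset.sum_compl_add_sum ({i} : Finset (Fin m)) (fun j => (⟪y j, y i⟫ : ℝ))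
      simp only [Finset.sum_singleton, real_inner_self_eq_norm_sq] at this
      linarith
    have : 2 * S = N - B := by
      rw [hoff]
      simp_rw [hcompl]
      rw [Finset.sum_sub_distrib, htot, hB]
    linarith
  have h1 : ∑ i, (⟪(1 / α i) • y i + ∑ j ∈ Finset.Ioi i, y j, y i⟫ : ℝ) = A + S := by
    rw [hA, hS, ← Finset.sum_add_distrib]
    refine Finset.sum_congr rfl fun i _ => ?_
    rw [inner_add_left, real_inner_smul_left, real_inner_self_eq_norm_sq, sum_inner]
  have hsplit : ∑ i, (1 / α i - 1 / 2) * ‖y i‖ ^ 2 = A - (1 / 2) * B := by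
    rw [hA, hB, Finset.mul_sum, ← Finset.sum_sub_distrib]
    exact Finset.sum_congr rfl fun i _ => by ring
  have hid : ∑ i, (⟪(1 / α i) • y i + ∑ j ∈ Finset.Ioi i, y j, y i⟫ : ℝ) =
      ∑ i, (1 / α i - 1 / 2) * ‖y i‖ ^ 2 + (1 / 2) * N := by
    rw [h1, hsplit]; linarith
  have hNnn : 0 ≤ N := by positivity
  have hAB : (1 / ᾱ) * B ≤ A := by
    rw [hA, hB, Finset.mul_sum]
    refine Finset.sum_le_sum fun i _ => ?_
    exact mul_le_mul_of_nonneg_right (one_div_le_one_div_of_le (hαpos i) (hᾱle i)) (sq_nonneg _)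
  have hc : 0 ≤ 1 / ᾱ - 1 / 2 := by
    have : 1 / 2 < 1 / ᾱ := by
      apply one_div_lt_one_div_of_lt hᾱpos hᾱlt2
    linarith
  have hNmB : N ≤ (m : ℝ) * B := by
    have h1 : ‖∑ i, y i‖ ≤ ∑ i, ‖y i‖ := norm_sum_le _ _
    have h2 : N ≤ (∑ i, ‖y i‖) ^ 2 := by
      rw [hN]
      exact pow_le_pow_left₀ (norm_nonneg _) h1 2
    have h3 : (∑ i, ‖y i‖) ^ 2 ≤ (m : ℝ) * B := by
      have := sq_sum_le_card_mul_sum_sq (s := (Finset.univ : Finset (Fin m)))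
        (f := fun i => ‖y i‖)
      simpa [hB, Finset.card_univ] using this
    linarith
  refine ⟨hid, ?_, ?_⟩
  · rw [ge_iff_le, h1, hsplit] at *
    have hS2 : 2 * S = N - B := by linarith
    nlinarith
  · rw [ge_iff_le]
    have key : (1 / (m : ℝ)) * (1 / ᾱ - 1 / 2) * N ≤ (1 / (m : ℝ)) * (1 / ᾱ - 1 / 2) * ((m : ℝ) * B) := by
      apply mul_le_mul_of_nonneg_left hNmB
      positivity
    have hm' : (m : ℝ) ≠ 0 := by positivity
    calc (1 / (m : ℝ)) * (1 / ᾱ - 1 / 2) * N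
        ≤ (1 / (m : ℝ)) * (1 / ᾱ - 1 / 2) * ((m : ℝ) * B) := key
      _ = (1 / ᾱ - 1 / 2) * B := by field_simp
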